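/- Let f ∈ ℂ[z] be a polynomial of degree d > 1. Then the functions z ↦ (d^n−1)^{-1}·log|(f^n)'(z)| − g_f(z) converge to 0 as n → ∞, uniformly on every compact subset of the set Ω := I_∞(f) \ ⋃_{n≥0} (f^n)^{-1}(C(f)∩ℂ). -/

import Mathlib

open Polynomial MeasureTheory Filter

/-- The `n`-th iterate of a polynomial `f` (as a polynomial). -/
noncomputable def polyIter (f : Polynomial ℂ) : ℕ → Polynomial ℂ
  | 0 => Polynomial.X
  | n + 1 => f.comp (polyIter f n)

/-- The basin of infinity `I_∞(f) = {z : |f^n(z)| → ∞}`. -/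
def basinInfty (f : Polynomial ℂ) : Set ℂ :=
  {z : ℂ | Tendsto (fun n : ℕ => ‖(polyIter f n).eval z‖) atTop atTop}

lemma polyIter_eval_succ (f : Polynomial ℂ) (n : ℕ) (z : ℂ) :
    (polyIter f (n + 1)).eval z = f.eval ((polyIter f n).eval z) := by
  simp [polyIter, eval_comp]

lemma polyIter_eval_add (f : Polynomial ℂ) (m j : ℕ) (z : ℂ) :
    (polyIter f (m + j)).eval z = (polyIter f j).eval ((polyIter f m).eval z) := by
  induction j with
  | zero => simp [polyIter]
  | succ j ih => rw [← Nat.add_assoc, polyIter_eval_succ, ih, polyIter_eval_succ]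

lemma deriv_eval (f : Polynomial ℂ) (n : ℕ) (z : ℂ) :
    (Polynomial.derivative (polyIter f n)).eval z
      = ∏ k ∈ Finset.range n, (Polynomial.derivative f).eval ((polyIter f k).eval z) := by
  induction n with
  | zero => simp [polyIter]
  | succ n ih =>
      rw [Finset.prod_range_succ, ← ih]
      show (Polynomial.derivative (f.comp (polyIter f n))).eval z = _
      rw [Polynomial.derivative_comp]
      simp [eval_comp]

lemma log_bound {c C x y : ℝ} (hc : 0 < c) (hC : 0 < C) (hx : 0 < x)
    (hlow : c * x ≤ y) (hup : y ≤ C * x) :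
    |Real.log y - Real.log x| ≤ max |Real.log c| |Real.log C| := by
  have hy : 0 < y := lt_of_lt_of_le (by positivity) hlow
  have h1 : Real.log c + Real.log x ≤ Real.log y := by
    rw [← Real.log_mul hc.ne' hx.ne']
    exact (Real.log_le_log_iff (by positivity) hy).mpr hlow
  have h2 : Real.log y ≤ Real.log C + Real.log x := by
    rw [← Real.log_mul hC.ne' hx.ne']
    exact (Real.log_le_log_iff hy (by positivity)).mpr hup
  rw [abs_le]
  constructor
  · have ha := neg_abs_le (Real.log c)
    have hb := le_max_left |Real.log c| |Real.log C|
    linarith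
  · have ha := le_abs_self (Real.log C)
    have hb := le_max_right |Real.log c| |Real.log C|
    linarith

set_option maxHeartbeats 1000000 in
lemma poly_bound (p : Polynomial ℂ) (m : ℕ) (hm : 1 ≤ m) (hdeg : p.natDegree = m) :
    ∃ R c C : ℝ, 1 ≤ R ∧ 0 < c ∧ 0 < C ∧ ∀ w : ℂ, R ≤ ‖w‖ →
      c * ‖w‖ ^ m ≤ ‖p.eval w‖ ∧
        ‖p.eval w‖ ≤ C * ‖w‖ ^ m := by
  obtain ⟨m', rfl⟩ : ∃ m', m = m' + 1 := ⟨m - 1, by omega⟩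
  have hp0 : p ≠ 0 := by
    intro h; rw [h, natDegree_zero] at hdeg; omega
  have hbne : p.coeff (m' + 1) ≠ 0 := by
    have : p.coeff (m' + 1) = p.leadingCoeff := by rw [← hdeg]; rfl
    rw [this]
    exact Polynomial.leadingCoeff_ne_zero.mpr hp0
  set b := p.coeff (m' + 1) with hb
  have hbpos : 0 < ‖b‖ := norm_pos_iff.mpr hbne
  set S : ℝ := ∑ i ∈ Finset.range (m' + 1), ‖p.coeff i‖ with hS
  have hS0 : 0 ≤ S := Finset.sum_nonneg fun i _ => norm_nonneg _
  refine ⟨max 1 ((2 * S + 1) / ‖b‖), ‖b‖ / 2, ‖b‖ + S,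
    le_max_left _ _, by positivity, by positivity, ?_⟩
  intro w hw
  have hw1 : (1 : ℝ) ≤ ‖w‖ := le_trans (le_max_left _ _) hw
  have hw0 : (0 : ℝ) < ‖w‖ := lt_of_lt_of_le one_pos hw1
  have hkey : ‖p.eval w - b * w ^ (m' + 1)‖ ≤ S * ‖w‖ ^ m' := by
    have he : p.eval w = ∑ i ∈ Finset.range (m' + 1 + 1), p.coeff i * w ^ i := by
      rw [eval_eq_sum_range, hdeg]
    rw [he, Finset.sum_range_succ, ← hb, add_sub_cancel_right]
    refine le_trans (norm_sum_le _ _) ?_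
    rw [hS, Finset.sum_mul]
    refine Finset.sum_le_sum ?_
    intro i hi
    rw [norm_mul, norm_pow]
    have him : i ≤ m' := by
      have := Finset.mem_range.mp hi; omega
    have : ‖w‖ ^ i ≤ ‖w‖ ^ m' := pow_le_pow_right₀ hw1 him
    have h0 : 0 ≤ ‖p.coeff i‖ := norm_nonneg _
    nlinarith
  have hwR : 2 * S + 1 ≤ ‖b‖ * ‖w‖ := by
    have h1 : (2 * S + 1) / ‖b‖ ≤ ‖w‖ := le_trans (le_max_right _ _) hw
    calc 2 * S + 1 = ‖b‖ * ((2 * S + 1) / ‖b‖) := by field_simp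
      _ ≤ ‖b‖ * ‖w‖ := by
          exact mul_le_mul_of_nonneg_left h1 hbpos.le
  have hpow : ‖w‖ ^ (m' + 1) = ‖w‖ ^ m' * ‖w‖ := pow_succ _ _
  have habsbw : ‖b * w ^ (m' + 1)‖ = ‖b‖ * ‖w‖ ^ (m' + 1) := by
    rw [norm_mul, norm_pow]
  have hwm : (0:ℝ) ≤ ‖w‖ ^ m' := by positivity
  constructor
  · have h4 : ‖b * w ^ (m' + 1)‖
        ≤ ‖p.eval w‖ + ‖p.eval w - b * w ^ (m' + 1)‖ := by
      have heq : b * w ^ (m' + 1) = p.eval w - (p.eval w - b * w ^ (m' + 1)) := by ring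
      calc ‖b * w ^ (m' + 1)‖
          = ‖p.eval w - (p.eval w - b * w ^ (m' + 1))‖ := by rw [← heq]
        _ ≤ _ := norm_sub_le _ _
    rw [habsbw] at h4
    nlinarith [mul_le_mul_of_nonneg_right hwR hwm]
  · have h5 : ‖p.eval w‖
        ≤ ‖b * w ^ (m' + 1)‖ + ‖p.eval w - b * w ^ (m' + 1)‖ := by
      have heq : p.eval w = b * w ^ (m' + 1) + (p.eval w - b * w ^ (m' + 1)) := by ring
      calc ‖p.eval w‖
          = ‖b * w ^ (m' + 1) + (p.eval w - b * w ^ (m' + 1))‖ := by rw [← heq]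
        _ ≤ _ := norm_add_le _ _
    rw [habsbw] at h5
    have h6 : ‖w‖ ^ m' ≤ ‖w‖ ^ (m' + 1) :=
      pow_le_pow_right₀ hw1 (Nat.le_succ _)
    nlinarith

set_option maxHeartbeats 2000000 in
theorem stmt4 (f : Polynomial ℂ) (d : ℕ) (hd : 1 < d) (hdeg : f.natDegree = d)
    (g : ℂ → ℝ)
    (hg : ∀ z : ℂ, Tendsto
      (fun n : ℕ => Real.log (max 1 (‖(polyIter f n).eval z‖)) / (d : ℝ) ^ n)
      atTop (nhds (g z)))
    (K : Set ℂ) (hK : IsCompact K)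
    (hKΩ : K ⊆ basinInfty f \
      ⋃ n : ℕ, {z : ℂ | (Polynomial.derivative f).eval ((polyIter f n).eval z) = 0}) :
    TendstoUniformlyOn
      (fun (n : ℕ) (z : ℂ) =>
        Real.log (‖(Polynomial.derivative (polyIter f n)).eval z‖) /
          ((d : ℝ) ^ n - 1) - g z)
      0 atTop K := by
  classical
  have hd1 : (1 : ℝ) < (d : ℝ) := by exact_mod_cast hd
  have hd0 : (0 : ℝ) < (d : ℝ) := lt_trans one_pos hd1
  have hd2 : (2 : ℝ) ≤ (d : ℝ) := by exact_mod_cast hd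
  have hbasin : ∀ z ∈ K,
      Tendsto (fun n : ℕ => ‖(polyIter f n).eval z‖) atTop atTop :=
    fun z hz => (hKΩ hz).1
  have hcrit : ∀ z ∈ K, ∀ n : ℕ,
      (Polynomial.derivative f).eval ((polyIter f n).eval z) ≠ 0 := by
    intro z hz n h
    exact (hKΩ hz).2 (Set.mem_iUnion.mpr ⟨n, h⟩)
  obtain ⟨Rf, cf, Cf, hRf1, hcf, hCf, hf⟩ := poly_bound f d (by omega) hdeg
  have hfne : f ≠ 0 := by intro h; rw [h, natDegree_zero] at hdeg; omega
  have hlc : f.coeff d ≠ 0 := by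
    rw [← hdeg]; exact Polynomial.leadingCoeff_ne_zero.mpr hfne
  have hfd : (Polynomial.derivative f).natDegree = d - 1 := by
    refine le_antisymm (le_trans (Polynomial.natDegree_derivative_le f) (by rw [hdeg])) ?_
    apply Polynomial.le_natDegree_of_ne_zero
    rw [Polynomial.coeff_derivative]
    have h1 : d - 1 + 1 = d := by omega
    rw [h1]
    exact mul_ne_zero hlc (Nat.cast_add_one_ne_zero _)
  obtain ⟨Rg, cg, Cg, hRg1, hcg, hCg, hf'⟩ :=
    poly_bound (Polynomial.derivative f) (d - 1) (by omega) hfd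
  set R0 : ℝ := max (max Rf Rg) (2 / cf) with hR0
  have hR0f : Rf ≤ R0 := le_trans (le_max_left _ _) (le_max_left _ _)
  have hR0g : Rg ≤ R0 := le_trans (le_max_right _ _) (le_max_left _ _)
  have hR0c : 2 / cf ≤ R0 := le_max_right _ _
  have hR01 : (1 : ℝ) ≤ R0 := le_trans hRf1 hR0f
  -- doubling
  have hdouble : ∀ w : ℂ, R0 ≤ ‖w‖ →
      2 * ‖w‖ ≤ ‖f.eval w‖ := by
    intro w hw
    have hw1 : (1 : ℝ) ≤ ‖w‖ := le_trans hR01 hw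
    have hw0 : (0 : ℝ) < ‖w‖ := lt_of_lt_of_le one_pos hw1
    have h1 := (hf w (le_trans hR0f hw)).1
    have h2 : ‖w‖ ≤ ‖w‖ ^ (d - 1) := le_self_pow₀ hw1 (by omega)
    have h3 : ‖w‖ ^ d = ‖w‖ ^ (d - 1) * ‖w‖ := by
      rw [← pow_succ]
      congr 1
      omega
    have h4 : 2 / cf ≤ ‖w‖ := le_trans hR0c hw
    have h5 : cf * (2 / cf) = 2 := by field_simp
    nlinarith [mul_le_mul_of_nonneg_right h2 hw0.le,
      mul_le_mul_of_nonneg_left h4 hcf.le]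
  -- R0 is preserved by iteration
  have hgrow : ∀ w : ℂ, R0 ≤ ‖w‖ → ∀ j : ℕ,
      R0 ≤ ‖(polyIter f j).eval w‖ := by
    intro w hw j
    induction j with
    | zero => simpa [polyIter] using hw
    | succ j ih =>
        rw [polyIter_eval_succ]
        have := hdouble _ ih
        have hR00 : (0 : ℝ) ≤ R0 := le_trans zero_le_one hR01
        nlinarith
  -- uniform escape
  obtain ⟨N, hN⟩ : ∃ N : ℕ, ∀ z ∈ K, ∀ k, N ≤ k →
      R0 ≤ ‖(polyIter f k).eval z‖ := by
    have hopen : ∀ n : ℕ, IsOpen {w : ℂ | R0 < ‖(polyIter f n).eval w‖} :=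
      fun n => isOpen_lt continuous_const
        (continuous_norm.comp (polyIter f n).continuous)
    have hcover : K ⊆ ⋃ n : ℕ, {w : ℂ | R0 < ‖(polyIter f n).eval w‖} := by
      intro z hz
      obtain ⟨n, hn⟩ := ((hbasin z hz).eventually (eventually_gt_atTop R0)).exists
      exact Set.mem_iUnion.mpr ⟨n, hn⟩
    obtain ⟨s, hs⟩ := hK.elim_finite_subcover _ hopen hcover
    refine ⟨s.sup id, ?_⟩
    intro z hz k hk
    obtain ⟨n, hns, hn⟩ := Set.mem_iUnion₂.mp (hs hz)
    have hnN : n ≤ s.sup id := Finset.le_sup (f := id) hns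
    have hkn : k = n + (k - n) := by omega
    rw [hkn, polyIter_eval_add]
    exact hgrow _ (le_of_lt hn) _
  -- log bounds
  set A : ℝ := max |Real.log cg| |Real.log Cg| with hA_def
  have hA0 : 0 ≤ A := le_trans (abs_nonneg _) (le_max_left _ _)
  have hA : ∀ w : ℂ, R0 ≤ ‖w‖ →
      |Real.log (‖(Polynomial.derivative f).eval w‖)
        - ((d : ℝ) - 1) * Real.log (‖w‖)| ≤ A := by
    intro w hw
    have hw0 : (0 : ℝ) < ‖w‖ := lt_of_lt_of_le one_pos (le_trans hR01 hw)
    obtain ⟨h1, h2⟩ := hf' w (le_trans hR0g hw)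
    have := log_bound hcg hCg (pow_pos hw0 (d - 1)) h1 h2
    rw [Real.log_pow] at this
    have hcast : ((d - 1 : ℕ) : ℝ) = (d : ℝ) - 1 := by
      push_cast [Nat.cast_sub (by omega : 1 ≤ d)]
      ring
    rwa [hcast] at this
  set B0 : ℝ := max |Real.log cf| |Real.log Cf| with hB0_def
  have hB00 : 0 ≤ B0 := le_trans (abs_nonneg _) (le_max_left _ _)
  have hB0 : ∀ w : ℂ, R0 ≤ ‖w‖ →
      |Real.log (‖f.eval w‖) - (d : ℝ) * Real.log (‖w‖)| ≤ B0 := by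
    intro w hw
    have hw0 : (0 : ℝ) < ‖w‖ := lt_of_lt_of_le one_pos (le_trans hR01 hw)
    obtain ⟨h1, h2⟩ := hf w (le_trans hR0f hw)
    have := log_bound hcf hCf (pow_pos hw0 d) h1 h2
    rw [Real.log_pow] at this
    exact_mod_cast this
  set B : ℝ := B0 / ((d : ℝ) - 1) with hB_def
  have hB0' : 0 ≤ B := div_nonneg hB00 (by linarith)
  -- Green function comparison
  have key_g : ∀ z ∈ K, ∀ k : ℕ, N ≤ k →
      |(d : ℝ) ^ k * g z - Real.log (‖(polyIter f k).eval z‖)| ≤ B := by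
    intro z hz k hk
    set t : ℕ → ℝ :=
      fun m => Real.log (‖(polyIter f (k + m)).eval z‖) / (d : ℝ) ^ m with ht
    have habs : ∀ m : ℕ, R0 ≤ ‖(polyIter f (k + m)).eval z‖ :=
      fun m => hN z hz _ (by omega)
    have habs1 : ∀ m : ℕ, (1 : ℝ) ≤ ‖(polyIter f (k + m)).eval z‖ :=
      fun m => le_trans hR01 (habs m)
    have hstep : ∀ m : ℕ, |t (m + 1) - t m| ≤ B0 / (d : ℝ) ^ (m + 1) := by
      intro m
      have h1 : (polyIter f (k + (m + 1))).eval z = f.eval ((polyIter f (k + m)).eval z) := by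
        rw [show k + (m + 1) = (k + m) + 1 by ring, polyIter_eval_succ]
      have h2 := hB0 _ (habs m)
      have hdm : ((d : ℝ) ^ (m + 1)) ≠ 0 := by positivity
      have hdm' : ((d : ℝ) ^ m) ≠ 0 := by positivity
      have heq : t (m + 1) - t m
          = (Real.log (‖f.eval ((polyIter f (k + m)).eval z)‖)
            - (d : ℝ) * Real.log (‖(polyIter f (k + m)).eval z‖))
              / (d : ℝ) ^ (m + 1) := by
        rw [ht]
        simp only
        rw [h1]
        field_simp
        ring
      rw [heq, abs_div, abs_of_pos (pow_pos hd0 (m + 1))]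
      exact (div_le_div_iff_of_pos_right (pow_pos hd0 (m + 1))).mpr h2
    have hdiff : ∀ m : ℕ, |t m - t 0| ≤ B * (1 - (1 / (d : ℝ)) ^ m) := by
      intro m
      induction m with
      | zero => simp
      | succ m ih =>
          have h1 := hstep m
          have h2 : B0 / (d : ℝ) ^ (m + 1)
              = B * (1 / (d : ℝ)) ^ m - B * (1 / (d : ℝ)) ^ (m + 1) := by
            rw [hB_def]
            have hdne : (d : ℝ) ≠ 0 := hd0.ne'
            have hdne1 : (d : ℝ) - 1 ≠ 0 := by linarith
            rw [div_pow, div_pow, one_pow, one_pow]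
            field_simp
            ring
          have h3 : |t (m + 1) - t 0| ≤ |t (m + 1) - t m| + |t m - t 0| := by
            have := abs_add_le (t (m + 1) - t m) (t m - t 0)
            simpa using this
          rw [h2] at h1
          linarith
    have hdiffB : ∀ m : ℕ, |t m - t 0| ≤ B := by
      intro m
      have h1 := hdiff m
      have h2 : (0:ℝ) ≤ (1 / (d : ℝ)) ^ m := by positivity
      nlinarith
    have hT : Tendsto t atTop (nhds ((d : ℝ) ^ k * g z)) := by
      have h1 : Tendsto
          (fun m : ℕ => Real.log (max 1 (‖(polyIter f (m + k)).eval z‖))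
            / (d : ℝ) ^ (m + k)) atTop (nhds (g z)) :=
        (hg z).comp (tendsto_add_atTop_nat k)
      have h2 := h1.const_mul ((d : ℝ) ^ k)
      refine h2.congr ?_
      intro m
      have h3 : max 1 (‖(polyIter f (m + k)).eval z‖)
          = ‖(polyIter f (m + k)).eval z‖ := by
        rw [max_eq_right]
        rw [Nat.add_comm m k]
        exact habs1 m
      rw [h3, ht]
      simp only
      rw [Nat.add_comm m k, pow_add]
      have hdne : ((d : ℝ) ^ k) ≠ 0 := by positivity
      have hdne' : ((d : ℝ) ^ m) ≠ 0 := by positivity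
      field_simp
    have ht0 : t 0 = Real.log (‖(polyIter f k).eval z‖) := by
      rw [ht]; simp
    have hTlim : Tendsto (fun m => |t m - t 0|) atTop
        (nhds |(d : ℝ) ^ k * g z - t 0|) := ((hT.sub_const (t 0)).abs)
    have := le_of_tendsto hTlim (Eventually.of_forall hdiffB)
    rwa [ht0] at this
  -- bound on g over K
  obtain ⟨MN, hMN⟩ := hK.exists_bound_of_continuousOn (polyIter f N).continuous.continuousOn
  set G : ℝ := Real.log (max 1 MN) + B with hG_def
  have hlogMN : (0:ℝ) ≤ Real.log (max 1 MN) := Real.log_nonneg (le_max_left _ _)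
  have hG0 : 0 ≤ G := by rw [hG_def]; linarith
  have hG : ∀ z ∈ K, |g z| ≤ G := by
    intro z hz
    have h1 := key_g z hz N le_rfl
    have h2 : R0 ≤ ‖(polyIter f N).eval z‖ := hN z hz N le_rfl
    have h2' : (1:ℝ) ≤ ‖(polyIter f N).eval z‖ := le_trans hR01 h2
    have hlog1 : 0 ≤ Real.log (‖(polyIter f N).eval z‖) := Real.log_nonneg h2'
    have hlog2 : Real.log (‖(polyIter f N).eval z‖) ≤ Real.log (max 1 MN) := by
      apply Real.log_le_log (lt_of_lt_of_le one_pos h2')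
      exact le_trans (le_of_eq rfl) (le_trans (hMN z hz) (le_max_right _ _))
    have hdN : (1:ℝ) ≤ (d : ℝ) ^ N := one_le_pow₀ hd1.le
    set L : ℝ := Real.log (‖(polyIter f N).eval z‖) with hL
    have h3 : |g z| ≤ |(d:ℝ)^N * g z| := by
      rw [abs_mul, abs_of_nonneg (by positivity : (0:ℝ) ≤ (d:ℝ)^N)]
      exact le_mul_of_one_le_left (abs_nonneg _) hdN
    have h4 : |(d:ℝ)^N * g z| ≤ |(d:ℝ)^N * g z - L| + |L| := by
      have h5 := abs_add_le ((d:ℝ)^N * g z - L) L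
      simpa using h5
    rw [abs_of_nonneg hlog1] at h4
    rw [hG_def]
    linarith
  -- bound on the first N terms
  have hEk : ∀ k : ℕ, ∃ Ek : ℝ, ∀ z ∈ K,
      |Real.log (‖(Polynomial.derivative f).eval ((polyIter f k).eval z)‖)| ≤ Ek := by
    intro k
    have hcont : ContinuousOn
        (fun z : ℂ => Real.log (‖(Polynomial.derivative f).eval ((polyIter f k).eval z)‖)) K := by
      apply ContinuousOn.log
      · exact (continuous_norm.comp
          ((Polynomial.derivative f).continuous.comp (polyIter f k).continuous)).continuousOn
      · intro z hz
        simpa using (hcrit z hz k)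
    obtain ⟨C, hC⟩ := hK.exists_bound_of_continuousOn hcont
    exact ⟨C, fun z hz => by simpa [Real.norm_eq_abs] using hC z hz⟩
  choose Efun hEfun using hEk
  set E : ℝ := ∑ k ∈ Finset.range N, max 0 (Efun k) with hE_def
  have hE0 : 0 ≤ E := Finset.sum_nonneg fun i _ => le_max_left _ _
  have hE : ∀ k, k < N → ∀ z ∈ K,
      |Real.log (‖(Polynomial.derivative f).eval ((polyIter f k).eval z)‖)| ≤ E := by
    intro k hkN z hz
    refine le_trans (hEfun k z hz) (le_trans (le_max_right 0 _) ?_)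
    exact Finset.single_le_sum (f := fun i => max 0 (Efun i))
      (fun i _ => le_max_left _ _) (Finset.mem_range.mpr hkN)
  -- main estimate
  set Q : ℝ := E + (d:ℝ)^N * G + (A + ((d:ℝ) - 1) * B) with hQ_def
  have hQ0 : 0 ≤ Q := by
    have : (0:ℝ) ≤ (d:ℝ)^N * G := by positivity
    have h1 : (0:ℝ) ≤ ((d:ℝ) - 1) * B := mul_nonneg (by linarith) hB0'
    rw [hQ_def]; linarith
  have hmain : ∀ n : ℕ, N ≤ n → ∀ z ∈ K,
      |Real.log (‖(Polynomial.derivative (polyIter f n)).eval z‖)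
        - ((d:ℝ)^n - 1) * g z| ≤ n * Q := by
    intro n hn z hz
    have hlogprod : Real.log (‖(Polynomial.derivative (polyIter f n)).eval z‖)
        = ∑ k ∈ Finset.range n,
            Real.log (‖(Polynomial.derivative f).eval ((polyIter f k).eval z)‖) := by
      rw [deriv_eval, norm_prod]
      exact Real.log_prod (fun k _ => by simpa using (hcrit z hz k))
    have hgeom : ((d:ℝ)^n - 1) * g z
        = ∑ k ∈ Finset.range n, ((d:ℝ) - 1) * ((d:ℝ)^k * g z) := by
      have h := geom_sum_mul (d:ℝ) n
      calc ((d:ℝ)^n - 1) * g z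
          = ((∑ i ∈ Finset.range n, (d:ℝ)^i) * ((d:ℝ) - 1)) * g z := by rw [h]
        _ = ∑ k ∈ Finset.range n, ((d:ℝ) - 1) * ((d:ℝ)^k * g z) := by
            rw [Finset.sum_mul, Finset.sum_mul]
            exact Finset.sum_congr rfl fun k _ => by ring
    rw [hlogprod, hgeom, ← Finset.sum_sub_distrib]
    refine le_trans (Finset.abs_sum_le_sum_abs _ _) ?_
    have hterm : ∀ k ∈ Finset.range n,
        |Real.log (‖(Polynomial.derivative f).eval ((polyIter f k).eval z)‖)
          - ((d:ℝ) - 1) * ((d:ℝ)^k * g z)| ≤ Q := by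
      intro k hkr
      by_cases hkN : k < N
      · have h1 := hE k hkN z hz
        have h2 : |((d:ℝ) - 1) * ((d:ℝ)^k * g z)| ≤ (d:ℝ)^N * G := by
          rw [abs_mul, abs_mul, abs_of_nonneg (by linarith : (0:ℝ) ≤ (d:ℝ) - 1),
            abs_of_nonneg (by positivity : (0:ℝ) ≤ (d:ℝ)^k)]
          have h3 : ((d:ℝ) - 1) * (d:ℝ)^k ≤ (d:ℝ)^N := by
            have h4 : ((d:ℝ) - 1) * (d:ℝ)^k ≤ (d:ℝ) * (d:ℝ)^k := by
              have : (0:ℝ) ≤ (d:ℝ)^k := by positivity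
              nlinarith
            have h5 : (d:ℝ) * (d:ℝ)^k = (d:ℝ)^(k+1) := (pow_succ' _ _).symm
            have h6 : (d:ℝ)^(k+1) ≤ (d:ℝ)^N := pow_le_pow_right₀ hd1.le (by omega)
            linarith
          have h7 := hG z hz
          have h8 : (0:ℝ) ≤ |g z| := abs_nonneg _
          have h9 : (0:ℝ) ≤ (d:ℝ)^N := by positivity
          nlinarith [mul_le_mul_of_nonneg_right h3 h8, mul_le_mul_of_nonneg_left h7 h9]
        calc |Real.log (‖(Polynomial.derivative f).eval ((polyIter f k).eval z)‖)
              - ((d:ℝ) - 1) * ((d:ℝ)^k * g z)|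
            ≤ |Real.log (‖(Polynomial.derivative f).eval ((polyIter f k).eval z)‖)|
              + |((d:ℝ) - 1) * ((d:ℝ)^k * g z)| := abs_sub _ _
          _ ≤ Q := by
              have h11 : (0:ℝ) ≤ A + ((d:ℝ) - 1) * B := by
                have := mul_nonneg (by linarith : (0:ℝ) ≤ (d:ℝ) - 1) hB0'
                linarith
              rw [hQ_def]; linarith
      · push_neg at hkN
        have h2 : R0 ≤ ‖(polyIter f k).eval z‖ := hN z hz k hkN
        have hA' := hA _ h2
        have hg' := key_g z hz k hkN
        have heq : Real.log (‖(Polynomial.derivative f).eval ((polyIter f k).eval z)‖)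
            - ((d:ℝ) - 1) * ((d:ℝ)^k * g z)
            = (Real.log (‖(Polynomial.derivative f).eval ((polyIter f k).eval z)‖)
                - ((d:ℝ) - 1) * Real.log (‖(polyIter f k).eval z‖))
              - ((d:ℝ) - 1) * ((d:ℝ)^k * g z - Real.log (‖(polyIter f k).eval z‖)) := by
          ring
        rw [heq]
        refine le_trans (abs_sub _ _) ?_
        have h3 : |((d:ℝ) - 1) * ((d:ℝ)^k * g z - Real.log (‖(polyIter f k).eval z‖))|
            ≤ ((d:ℝ) - 1) * B := by
          rw [abs_mul, abs_of_nonneg (by linarith : (0:ℝ) ≤ (d:ℝ) - 1)]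
          exact mul_le_mul_of_nonneg_left hg' (by linarith)
        have h4 : (0:ℝ) ≤ (d:ℝ)^N * G := by positivity
        rw [hQ_def]
        linarith
    calc ∑ k ∈ Finset.range n,
          |Real.log (‖(Polynomial.derivative f).eval ((polyIter f k).eval z)‖)
            - ((d:ℝ) - 1) * ((d:ℝ)^k * g z)|
        ≤ ∑ _k ∈ Finset.range n, Q := Finset.sum_le_sum hterm
      _ = n * Q := by rw [Finset.sum_const, Finset.card_range, nsmul_eq_mul]
  -- conclusion
  rw [Metric.tendstoUniformlyOn_iff]
  intro ε hε
  have htend : Tendsto (fun n : ℕ => 2 * Q * ((n:ℝ) * (1 / (d:ℝ))^n)) atTop (nhds 0) := by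
    have h1 : Tendsto (fun n : ℕ => (n:ℝ) * (1 / (d:ℝ))^n) atTop (nhds 0) := by
      apply tendsto_self_mul_const_pow_of_lt_one (by positivity)
      rw [div_lt_one hd0]
      exact hd1
    have h2 := h1.const_mul (2 * Q)
    simpa using h2
  have hev1 : ∀ᶠ n : ℕ in atTop, 2 * Q * ((n:ℝ) * (1 / (d:ℝ))^n) < ε := by
    have := htend.eventually (eventually_lt_nhds hε)
    simpa using this
  filter_upwards [hev1, eventually_ge_atTop (max N 1)] with n hn1 hn2
  intro z hz
  have hnN : N ≤ n := le_trans (le_max_left _ _) hn2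
  have hn1' : 1 ≤ n := le_trans (le_max_right _ _) hn2
  have hdn2 : (2:ℝ) ≤ (d:ℝ)^n := by
    calc (2:ℝ) ≤ (d:ℝ) := hd2
      _ = (d:ℝ)^1 := (pow_one _).symm
      _ ≤ (d:ℝ)^n := pow_le_pow_right₀ hd1.le hn1'
  have hden : (0:ℝ) < (d:ℝ)^n - 1 := by linarith
  have hmain' := hmain n hnN z hz
  rw [Pi.zero_apply, Real.dist_eq]
  have heq2 : (0:ℝ) - (Real.log (‖(Polynomial.derivative (polyIter f n)).eval z‖)
      / ((d:ℝ)^n - 1) - g z)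
      = -((Real.log (‖(Polynomial.derivative (polyIter f n)).eval z‖)
          - ((d:ℝ)^n - 1) * g z) / ((d:ℝ)^n - 1)) := by
    field_simp
    ring
  rw [heq2, abs_neg, abs_div, abs_of_pos hden]
  have hfrac : |Real.log (‖(Polynomial.derivative (polyIter f n)).eval z‖)
      - ((d:ℝ)^n - 1) * g z| / ((d:ℝ)^n - 1) ≤ (n:ℝ) * Q / ((d:ℝ)^n - 1) := by
    exact (div_le_div_iff_of_pos_right hden).mpr hmain'
  have hQn0 : (0:ℝ) ≤ (n:ℝ) * Q := mul_nonneg (Nat.cast_nonneg n) hQ0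
  have heq3 : (n:ℝ) * Q / ((d:ℝ)^n / 2) = 2 * Q * ((n:ℝ) * (1 / (d:ℝ))^n) := by
    have hdnn : ((d:ℝ)^n) ≠ 0 := by positivity
    rw [div_pow, one_pow]
    field_simp
  calc |Real.log (‖(Polynomial.derivative (polyIter f n)).eval z‖)
        - ((d:ℝ)^n - 1) * g z| / ((d:ℝ)^n - 1)
      ≤ (n:ℝ) * Q / ((d:ℝ)^n - 1) := hfrac
    _ ≤ (n:ℝ) * Q / ((d:ℝ)^n / 2) :=
        div_le_div_of_nonneg_left hQn0 (by positivity) (by linarith)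
    _ = 2 * Q * ((n:ℝ) * (1 / (d:ℝ))^n) := heq3
    _ < ε := hn1
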